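/- Let q ≥ 1 be an integer, α > 0, and let n_1, ..., n_q be non-negative integers with n = ∑_k n_k > 0 and m = #{k : n_k > 0}. Then -log pGam(α, n) + ∑_{k=1}^q log pGam(α/q, n_k) ≤ -m·log q. -/

import Mathlib

/-- `pGam α x = Γ(x+α)/Γ(α)`. -/
noncomputable def pGam (α : ℝ) (x : ℕ) : ℝ := Real.Gamma (x + α) / Real.Gamma α

lemma pGam_eq_prod (α : ℝ) (hα : 0 < α) (x : ℕ) :
    pGam α x = ∏ i ∈ Finset.range x, ((i : ℝ) + α) := by
  induction x with
  | zero => simp [pGam, div_self (Real.Gamma_pos_of_pos hα).ne']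
  | succ m ih =>
    have h : ((m : ℝ) + α) ≠ 0 := by positivity
    rw [Finset.prod_range_succ, ← ih]
    unfold pGam
    have hc : ((m + 1 : ℕ) : ℝ) + α = ((m : ℝ) + α) + 1 := by push_cast; ring
    rw [hc, Real.Gamma_add_one h]
    ring

lemma pGam_pos (α : ℝ) (hα : 0 < α) (x : ℕ) : 0 < pGam α x := by
  rw [pGam_eq_prod α hα]
  exact Finset.prod_pos fun i _ => by positivity

lemma pGam_mul_le (α : ℝ) (hα : 0 < α) (a b : ℕ) :
    pGam α a * pGam α b ≤ pGam α (a + b) := by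
  rw [pGam_eq_prod α hα, pGam_eq_prod α hα, pGam_eq_prod α hα,
    Finset.prod_range_add]
  refine mul_le_mul_of_nonneg_left (Finset.prod_le_prod (fun i _ => by positivity)
    fun i _ => ?_) (Finset.prod_nonneg fun i _ => by positivity)
  push_cast
  linarith [Nat.cast_nonneg (α := ℝ) a]

lemma prod_pGam_le (α : ℝ) (hα : 0 < α) (n : ℕ → ℕ) (s : Finset ℕ) :
    ∏ k ∈ s, pGam α (n k) ≤ pGam α (∑ k ∈ s, n k) := by
  classical
  induction s using Finset.induction with
  | empty => simp [pGam_eq_prod α hα]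
  | @insert a s ha ih =>
    rw [Finset.prod_insert ha, Finset.sum_insert ha]
    calc pGam α (n a) * ∏ k ∈ s, pGam α (n k)
        ≤ pGam α (n a) * pGam α (∑ k ∈ s, n k) := by
          exact mul_le_mul_of_nonneg_left ih (pGam_pos α hα _).le
      _ ≤ pGam α (n a + ∑ k ∈ s, n k) := pGam_mul_le α hα _ _

lemma q_mul_pGam_le (α : ℝ) (hα : 0 < α) (q : ℕ) (hq : 1 ≤ q) (x : ℕ) (hx : 0 < x) :
    (q : ℝ) * pGam (α / q) x ≤ pGam α x := by
  have hqR : (0 : ℝ) < q := by exact_mod_cast hq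
  have hqR1 : (1 : ℝ) ≤ q := by exact_mod_cast hq
  have hαq : 0 < α / q := by positivity
  obtain ⟨m, rfl⟩ := Nat.exists_eq_succ_of_ne_zero hx.ne'
  rw [pGam_eq_prod _ hαq, pGam_eq_prod α hα, Finset.prod_range_succ',
    Finset.prod_range_succ']
  have heq : (q : ℝ) * ((∏ i ∈ Finset.range m, (((i + 1 : ℕ) : ℝ) + α / q)) * ((0 : ℕ) + α / q))
      = (∏ i ∈ Finset.range m, (((i + 1 : ℕ) : ℝ) + α / q)) * α := by
    push_cast
    field_simp
    ring
  rw [heq]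
  push_cast
  rw [zero_add]
  refine mul_le_mul_of_nonneg_right (Finset.prod_le_prod (fun i _ => by positivity)
    fun i _ => ?_) hα.le
  have : α / q ≤ α := by
    rw [div_le_iff₀ hqR]
    nlinarith
  linarith

theorem stmt_8 (q : ℕ) (hq : 1 ≤ q) (α : ℝ) (hα : 0 < α) (n : ℕ → ℕ)
    (hN : 0 < ∑ k ∈ Finset.range q, n k) :
    -Real.log (pGam α (∑ k ∈ Finset.range q, n k)) +
        ∑ k ∈ Finset.range q, Real.log (pGam (α / q) (n k))
      ≤ -(((Finset.range q).filter fun k => 0 < n k).card : ℝ) * Real.log q := by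
  classical
  have hqR : (0 : ℝ) < q := by exact_mod_cast hq
  have hαq : 0 < α / q := by positivity
  set m := ((Finset.range q).filter fun k => 0 < n k).card with hm
  set B := ∏ k ∈ Finset.range q, pGam (α / q) (n k) with hB
  have hBpos : 0 < B := Finset.prod_pos fun k _ => pGam_pos _ hαq _
  have hApos : 0 < pGam α (∑ k ∈ Finset.range q, n k) := pGam_pos α hα _
  -- key product inequality
  have key : (q : ℝ) ^ m * B ≤ pGam α (∑ k ∈ Finset.range q, n k) := by
    have h1 : (q : ℝ) ^ m = ∏ k ∈ Finset.range q,
        (if 0 < n k then (q : ℝ) else 1) := by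
      rw [hm, ← Finset.prod_const, Finset.prod_filter]
    have h2 : (q : ℝ) ^ m * B = ∏ k ∈ Finset.range q,
        ((if 0 < n k then (q : ℝ) else 1) * pGam (α / q) (n k)) := by
      rw [h1, hB, ← Finset.prod_mul_distrib]
    rw [h2]
    calc ∏ k ∈ Finset.range q, ((if 0 < n k then (q : ℝ) else 1) * pGam (α / q) (n k))
        ≤ ∏ k ∈ Finset.range q, pGam α (n k) := by
          refine Finset.prod_le_prod (fun k _ => ?_) fun k _ => ?_
          · have := pGam_pos _ hαq (n k)
            split <;> positivity
          by_cases hk : 0 < n k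
          · simp only [hk, if_pos]
            exact q_mul_pGam_le α hα q hq (n k) hk
          · have : n k = 0 := Nat.eq_zero_of_not_pos hk
            simp [hk, this, pGam_eq_prod _ hαq, pGam_eq_prod α hα]
      _ ≤ pGam α (∑ k ∈ Finset.range q, n k) := prod_pGam_le α hα n _
  -- take logs
  have hlogsum : ∑ k ∈ Finset.range q, Real.log (pGam (α / q) (n k)) = Real.log B := by
    rw [hB, Real.log_prod]
    exact fun k _ => (pGam_pos _ hαq _).ne'
  have hlog : Real.log ((q : ℝ) ^ m * B) ≤
      Real.log (pGam α (∑ k ∈ Finset.range q, n k)) :=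
    Real.log_le_log (by positivity) key
  rw [Real.log_mul (by positivity) hBpos.ne', Real.log_pow] at hlog
  rw [hlogsum]
  linarith
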